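/- Cyclic wheel integral and Bernoulli numbers: for every integer k ≥ 2, the integral I_k = ∫_{[0,1]^{k-1}} Π_{i=0}^{k-1} ( frac(t_{i+1} − t_i) − 1/2 ) dt₁ ⋯ dt_{k-1}, where t₀ = t_k = 0 and frac denotes the fractional part, satisfies I_k = 0 when k is odd and I_k = −B_k/k! when k is even, where B_k is the k-th Bernoulli number; equivalently, for even k, I_k = 2ζ(k)/(2πi)^k. -/

import Mathlib

open scoped Real
open MeasureTheory intervalIntegral

noncomputable section
namespace CWI

def f (u : ℝ) : ℝ := Int.fract u - 1/2

lemma f_periodic : Function.Periodic f 1 := fun x => by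
  simp [f, Int.fract_add_one]

lemma measurable_f : Measurable f := measurable_fract.sub measurable_const

lemma abs_f_le (u : ℝ) : |f u| ≤ 1 := by
  have h1 := Int.fract_nonneg u
  have h2 := Int.fract_lt_one u
  rw [f, abs_le]; constructor <;> linarith

@[fun_prop]
lemma continuous_bernoulliFun (k : ℕ) : Continuous (bernoulliFun k) :=
  Polynomial.continuous _

lemma bernoulliFun_one_eval (x : ℝ) : bernoulliFun 1 x = x - 1/2 := by
  simp [bernoulliFun, Polynomial.bernoulli, Finset.sum_range_succ]
  ring

lemma bern_bound (k : ℕ) : ∃ C, ∀ y : ℝ, |bernoulliFun k (Int.fract y)| ≤ C := by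
  obtain ⟨C, hC⟩ := (isCompact_Icc (a := (0:ℝ)) (b := 1)).exists_bound_of_continuousOn
    (continuous_bernoulliFun k).continuousOn
  exact ⟨C, fun y => hC _ ⟨Int.fract_nonneg y, (Int.fract_lt_one y).le⟩⟩

end CWI

namespace CWI

lemma intervalIntegrable_of_bound {g : ℝ → ℝ} (hg : Measurable g) (C : ℝ)
    (h : ∀ t, |g t| ≤ C) (a b : ℝ) : IntervalIntegrable g volume a b := by
  rw [intervalIntegrable_iff]
  refine Integrable.mono' (g := fun _ => C)
    (integrableOn_const measure_Ioc_lt_top.ne)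
    hg.aestronglyMeasurable.restrict (ae_of_all _ fun t => ?_)
  simpa [Real.norm_eq_abs] using h t

lemma integral_bern (k : ℕ) (a b : ℝ) :
    ∫ u in a..b, bernoulliFun k u
      = (bernoulliFun (k+1) b - bernoulliFun (k+1) a) / (k+1) := by
  rw [intervalIntegral.integral_eq_sub_of_hasDerivAt (fun x _ => antideriv_bernoulliFun k x)
    ((continuous_bernoulliFun k).intervalIntegrable _ _)]
  ring

lemma integral_mul_bern (k : ℕ) (hk : k ≠ 0) :
    ∫ u in (0:ℝ)..1, u * bernoulliFun k u = bernoulliFun (k+1) 0 / (k+1) := by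
  have hd : ∀ x ∈ Set.uIcc (0:ℝ) 1, HasDerivAt (fun u => u * bernoulliFun (k+1) u)
      (bernoulliFun (k+1) x + x * ((k+1) * bernoulliFun k x)) x := by
    intro x _
    have h := (hasDerivAt_id x).fun_mul (hasDerivAt_bernoulliFun (k+1) x)
    simpa [Nat.add_sub_cancel] using h
  have hI : ∫ x in (0:ℝ)..1, (bernoulliFun (k+1) x + x * ((k+1) * bernoulliFun k x))
      = 1 * bernoulliFun (k+1) 1 - 0 * bernoulliFun (k+1) 0 := by
    exact intervalIntegral.integral_eq_sub_of_hasDerivAt hd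
      ((by fun_prop : Continuous fun x : ℝ =>
        bernoulliFun (k+1) x + x * (((k:ℝ)+1) * bernoulliFun k x)).intervalIntegrable _ _)
  rw [intervalIntegral.integral_add ((continuous_bernoulliFun (k+1)).intervalIntegrable _ _)
      ((by fun_prop : Continuous fun x : ℝ =>
        x * (((k:ℝ)+1) * bernoulliFun k x)).intervalIntegrable _ _),
    integral_bernoulliFun_eq_zero (Nat.succ_ne_zero k)] at hI
  have h2 : ∫ x in (0:ℝ)..1, x * (((k:ℝ)+1) * bernoulliFun k x)
      = ((k:ℝ)+1) * ∫ x in (0:ℝ)..1, x * bernoulliFun k x := by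
    rw [← intervalIntegral.integral_const_mul]
    congr 1; ext x; ring
  have h3 : bernoulliFun (k+1) 1 = bernoulliFun (k+1) 0 := by
    exact bernoulliFun_endpoints_eq_of_ne_one (by omega)
  push_cast at hI
  rw [h2, h3] at hI
  have hk1 : ((k:ℝ)+1) ≠ 0 := by positivity
  field_simp
  linarith [hI]

end CWI

namespace CWI

lemma conv_core_aux (k : ℕ) (hk : k ≠ 0) (a : ℝ) (ha0 : 0 ≤ a) (ha1 : a < 1) :
    ∫ t in (0:ℝ)..1, bernoulliFun k (Int.fract (a - t)) * f t
      = -bernoulliFun (k+1) a / (k+1) := by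
  obtain ⟨C, hC⟩ := bern_bound k
  have hmeas : Measurable fun t => bernoulliFun k (Int.fract (a - t)) * f t :=
    (((continuous_bernoulliFun k).measurable).comp
      ((measurable_const.sub measurable_id).fract)).mul measurable_f
  have hCnn : 0 ≤ C := le_trans (abs_nonneg _) (hC 0)
  have hint : ∀ u v : ℝ,
      IntervalIntegrable (fun t => bernoulliFun k (Int.fract (a - t)) * f t) volume u v := by
    intro u v
    refine intervalIntegrable_of_bound hmeas (C * 1) (fun t => ?_) u v
    rw [abs_mul]
    exact mul_le_mul (hC _) (abs_f_le t) (abs_nonneg _) hCnn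
  rw [← intervalIntegral.integral_add_adjacent_intervals (hint 0 a) (hint a 1)]
  have h1 : ∫ t in (0:ℝ)..a, bernoulliFun k (Int.fract (a - t)) * f t
      = ∫ u in (0:ℝ)..a, bernoulliFun k u * (a - u - 1/2) := by
    have hcg : ∫ t in (0:ℝ)..a, bernoulliFun k (Int.fract (a - t)) * f t
        = ∫ t in (0:ℝ)..a, (fun u => bernoulliFun k u * (a - u - 1/2)) (a - t) := by
      refine intervalIntegral.integral_congr fun t ht => ?_
      rw [Set.uIcc_of_le ha0] at ht
      obtain ⟨ht0, hta⟩ := ht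
      have h1 : Int.fract (a - t) = a - t :=
        Int.fract_eq_self.2 ⟨by linarith, by linarith⟩
      have h2 : Int.fract t = t := Int.fract_eq_self.2 ⟨ht0, by linarith⟩
      simp only [f, h1, h2]; ring
    rw [hcg, intervalIntegral.integral_comp_sub_left
      (fun u => bernoulliFun k u * (a - u - 1/2)) a]
    norm_num
  have h2 : ∫ t in a..1, bernoulliFun k (Int.fract (a - t)) * f t
      = ∫ u in a..1, bernoulliFun k u * (a - u + 1/2) := by
    have hcg : ∫ t in a..1, bernoulliFun k (Int.fract (a - t)) * f t
        = ∫ t in a..1, (fun u => bernoulliFun k u * (a - u + 1/2)) (a + 1 - t) := by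
      refine intervalIntegral.integral_congr_ae ?_
      have hae : ∀ᵐ t : ℝ, t ≠ 1 :=
        Filter.eventually_of_mem (MeasureTheory.compl_mem_ae_iff.2
          (measure_singleton (1:ℝ))) (fun t ht => ht)
      filter_upwards [hae] with t ht1 hmem
      rw [Set.uIoc_of_le ha1.le] at hmem
      obtain ⟨hta, ht1le⟩ := hmem
      have ht1lt : t < 1 := lt_of_le_of_ne ht1le ht1
      have h1 : Int.fract (a - t) = a - t + 1 := by
        rw [← Int.fract_add_one (a - t)]
        exact Int.fract_eq_self.2 ⟨by linarith, by linarith⟩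
      have h2 : Int.fract t = t := Int.fract_eq_self.2 ⟨by linarith, ht1lt⟩
      simp only [f, h1, h2]; ring_nf
    rw [hcg, intervalIntegral.integral_comp_sub_left
      (fun u => bernoulliFun k u * (a - u + 1/2)) (a+1)]
    norm_num
  rw [h1, h2]
  have e1 : ∫ u in (0:ℝ)..a, bernoulliFun k u * (a - u - 1/2)
      = (∫ u in (0:ℝ)..a, bernoulliFun k u * (a - u))
        - (1/2) * ∫ u in (0:ℝ)..a, bernoulliFun k u := by
    rw [← intervalIntegral.integral_const_mul, ← intervalIntegral.integral_sub
      ((by fun_prop : Continuous fun u : ℝ => bernoulliFun k u * (a - u)).intervalIntegrable _ _)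
      ((by fun_prop : Continuous fun u : ℝ => (1/2 : ℝ) * bernoulliFun k u).intervalIntegrable _ _)]
    congr 1; ext u; ring
  have e2 : ∫ u in a..1, bernoulliFun k u * (a - u + 1/2)
      = (∫ u in a..1, bernoulliFun k u * (a - u))
        + (1/2) * ∫ u in a..1, bernoulliFun k u := by
    rw [← intervalIntegral.integral_const_mul, ← intervalIntegral.integral_add
      ((by fun_prop : Continuous fun u : ℝ => bernoulliFun k u * (a - u)).intervalIntegrable _ _)
      ((by fun_prop : Continuous fun u : ℝ => (1/2 : ℝ) * bernoulliFun k u).intervalIntegrable _ _)]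
    congr 1; ext u; ring
  rw [e1, e2]
  have e3 : (∫ u in (0:ℝ)..a, bernoulliFun k u * (a - u))
      + ∫ u in a..1, bernoulliFun k u * (a - u)
      = ∫ u in (0:ℝ)..1, bernoulliFun k u * (a - u) :=
    intervalIntegral.integral_add_adjacent_intervals
      ((by fun_prop : Continuous fun u : ℝ => bernoulliFun k u * (a - u)).intervalIntegrable _ _)
      ((by fun_prop : Continuous fun u : ℝ => bernoulliFun k u * (a - u)).intervalIntegrable _ _)
  have e4 : ∫ u in (0:ℝ)..1, bernoulliFun k u * (a - u)
      = -(bernoulliFun (k+1) 0 / (k+1)) := by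
    have expand : ∫ u in (0:ℝ)..1, bernoulliFun k u * (a - u)
        = (∫ u in (0:ℝ)..1, bernoulliFun k u) * a - ∫ u in (0:ℝ)..1, u * bernoulliFun k u := by
      rw [← intervalIntegral.integral_mul_const, ← intervalIntegral.integral_sub
        ((by fun_prop : Continuous fun u : ℝ => bernoulliFun k u * a).intervalIntegrable _ _)
        ((by fun_prop : Continuous fun u : ℝ => u * bernoulliFun k u).intervalIntegrable _ _)]
      congr 1; ext u; ring
    rw [expand, integral_bernoulliFun_eq_zero hk, integral_mul_bern k hk]
    ring
  have e5 := integral_bern k 0 a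
  have e6 := integral_bern k a 1
  have e7 : bernoulliFun (k+1) 1 = bernoulliFun (k+1) 0 :=
    bernoulliFun_endpoints_eq_of_ne_one (by omega)
  have key : (∫ u in (0:ℝ)..a, bernoulliFun k u * (a - u))
      + ∫ u in a..1, bernoulliFun k u * (a - u) = -(bernoulliFun (k+1) 0 / (k+1)) := by
    rw [e3, e4]
  rw [e5, e6, e7]
  push_cast
  linear_combination key

lemma conv_core (k : ℕ) (hk : k ≠ 0) (x : ℝ) :
    ∫ t in (0:ℝ)..1, bernoulliFun k (Int.fract (x - t)) * f t
      = -bernoulliFun (k+1) (Int.fract x) / (k+1) := by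
  have hfr : ∀ t : ℝ, Int.fract (x - t) = Int.fract (Int.fract x - t) := by
    intro t
    refine Int.fract_eq_fract.2 ⟨⌊x⌋, ?_⟩
    have h := Int.self_sub_fract x
    linarith [h]
  simp_rw [hfr]
  exact conv_core_aux k hk (Int.fract x) (Int.fract_nonneg x) (Int.fract_lt_one x)

end CWI

namespace CWI

lemma conv_shift (k : ℕ) (hk : k ≠ 0) (a b : ℝ) :
    ∫ t in (0:ℝ)..1, f (t - a) * bernoulliFun k (Int.fract (b - t))
      = -bernoulliFun (k+1) (Int.fract (b - a)) / (k+1) := by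
  have hper : Function.Periodic
      (fun t => f (t - a) * bernoulliFun k (Int.fract (b - t))) 1 := by
    intro t
    have h1 : t + 1 - a = (t - a) + 1 := by ring
    have h2 : b - (t + 1) = b - t - (1 : ℤ) := by push_cast; ring
    simp only [h1, h2, f_periodic (t - a), Int.fract_sub_intCast]
  have hshift := hper.intervalIntegral_add_eq a 0
  rw [zero_add] at hshift
  rw [← hshift]
  have h3 : ∫ t in a..(a+1), f (t - a) * bernoulliFun k (Int.fract (b - t))
      = ∫ t in a..(a+1), (fun u => f u * bernoulliFun k (Int.fract (b - a - u))) (t - a) := by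
    refine intervalIntegral.integral_congr fun t _ => ?_
    have : b - a - (t - a) = b - t := by ring
    simp only [this]
  rw [h3, intervalIntegral.integral_comp_sub_right
    (fun u => f u * bernoulliFun k (Int.fract (b - a - u))) a]
  have h4 : ∫ u in (a-a)..(a+1-a), f u * bernoulliFun k (Int.fract (b - a - u))
      = ∫ u in (0:ℝ)..1, bernoulliFun k (Int.fract ((b - a) - u)) * f u := by
    have e1 : a - a = (0:ℝ) := by ring
    have e2 : a + 1 - a = (1:ℝ) := by ring
    rw [e1, e2]
    exact intervalIntegral.integral_congr fun t _ => by rw [mul_comm]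
  rw [h4, conv_core k hk (b - a)]

def W : (m : ℕ) → (Fin m → ℝ) → ℝ → ℝ → ℝ
  | 0, _, a, b => f (b - a)
  | m+1, x, a, b => f (x 0 - a) * W m (fun i => x i.succ) (x 0) b

lemma measurable_W (m : ℕ) (b : ℝ) :
    Measurable fun p : (Fin m → ℝ) × ℝ => W m p.1 p.2 b := by
  induction m generalizing b with
  | zero =>
    exact measurable_f.comp (measurable_const.sub measurable_snd)
  | succ m ih =>
    show Measurable fun p : (Fin (m+1) → ℝ) × ℝ =>
      f (p.1 0 - p.2) * W m (fun i => p.1 i.succ) (p.1 0) b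
    refine Measurable.mul ?_ ?_
    · exact measurable_f.comp (((measurable_pi_apply 0).comp measurable_fst).sub measurable_snd)
    · exact (ih b).comp (Measurable.prodMk
        (measurable_pi_iff.2 fun i => (measurable_pi_apply i.succ).comp measurable_fst)
        ((measurable_pi_apply 0).comp measurable_fst))

lemma abs_W_le (m : ℕ) (x : Fin m → ℝ) (a b : ℝ) : |W m x a b| ≤ 1 := by
  induction m generalizing a with
  | zero => exact abs_f_le _
  | succ m ih =>
    show |f (x 0 - a) * W m (fun i => x i.succ) (x 0) b| ≤ 1
    rw [abs_mul]
    calc |f (x 0 - a)| * |W m (fun i => x i.succ) (x 0) b|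
        ≤ 1 * 1 := mul_le_mul (abs_f_le _) (ih _ _) (abs_nonneg _) zero_le_one
      _ = 1 := mul_one 1

end CWI

namespace CWI

lemma integrableOn_of_bound {α : Type*} [MeasurableSpace α] {μ : Measure α} {s : Set α}
    (hs : μ s < ⊤) {g : α → ℝ} (hg : Measurable g) (C : ℝ) (h : ∀ t, |g t| ≤ C) :
    IntegrableOn g s μ := by
  refine Integrable.mono' (g := fun _ => C)
    (integrableOn_const hs.ne)
    hg.aestronglyMeasurable.restrict (ae_of_all _ fun t => ?_)
  simpa [Real.norm_eq_abs] using h t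

lemma volume_Icc_pi_lt_top (m : ℕ) : (volume (Set.Icc (0 : Fin m → ℝ) 1)) < ⊤ :=
  isCompact_Icc.measure_lt_top

lemma integral_W (m : ℕ) : ∀ a b : ℝ,
    ∫ x in Set.Icc (0 : Fin m → ℝ) 1, W m x a b
      = (-1:ℝ)^m * bernoulliFun (m+1) (Int.fract (b - a)) / (m+1).factorial := by
  induction m with
  | zero =>
    intro a b
    have huniv : Set.Icc (0 : Fin 0 → ℝ) 1 = Set.univ := by
      ext x
      simp only [Set.mem_Icc, Set.mem_univ, iff_true]
      constructor <;> (intro i; exact absurd i.2 (by omega))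
    rw [huniv, MeasureTheory.setIntegral_univ]
    show ∫ _x : (Fin 0 → ℝ), f (b - a) = _
    rw [MeasureTheory.integral_const]
    have hv : (volume : Measure (Fin 0 → ℝ)) Set.univ = 1 := by
      rw [MeasureTheory.volume_pi, MeasureTheory.Measure.pi_univ]
      simp
    rw [measureReal_def, hv]
    simp [f, bernoulliFun_one_eval]
  | succ m ih =>
    intro a b
    set H : ℝ × (Fin m → ℝ) → ℝ := fun p => f (p.1 - a) * W m p.2 p.1 b with hH
    set e := MeasurableEquiv.piFinSuccAbove (fun _ : Fin (m+1) => ℝ) 0 with hedef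
    have he : ∀ x : Fin (m+1) → ℝ, e x = (x 0, fun j => x j.succ) := by
      intro x
      rw [hedef]
      simp only [MeasurableEquiv.piFinSuccAbove_apply, Fin.insertNthEquiv_symm_apply]
      refine Prod.ext rfl ?_
      funext j
      simp [Fin.removeNth, Fin.zero_succAbove]
    have hWe : ∀ x : Fin (m+1) → ℝ, W (m+1) x a b = H (e x) := by
      intro x; rw [he x]; rfl
    have hpre : e ⁻¹' (Set.Icc (0:ℝ) 1 ×ˢ Set.Icc (0 : Fin m → ℝ) 1)
        = Set.Icc (0 : Fin (m+1) → ℝ) 1 := by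
      ext x
      simp only [Set.mem_preimage, he x, Set.mem_prod, Set.mem_Icc, Pi.le_def]
      constructor
      · rintro ⟨⟨h1, h2⟩, h3, h4⟩
        constructor <;> intro i <;>
          [exact Fin.cases h1 (fun j => h3 j) i; exact Fin.cases h2 (fun j => h4 j) i]
      · rintro ⟨h1, h2⟩
        exact ⟨⟨h1 0, h2 0⟩, fun j => h1 j.succ, fun j => h2 j.succ⟩
    have hHmeas : Measurable H := by
      refine Measurable.mul ?_ ?_
      · exact measurable_f.comp (measurable_fst.sub measurable_const)
      · exact (measurable_W m b).comp (measurable_snd.prodMk measurable_fst)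
    have hHbd : ∀ p, |H p| ≤ 1 := by
      intro p
      rw [hH]
      calc |f (p.1 - a) * W m p.2 p.1 b|
          = |f (p.1 - a)| * |W m p.2 p.1 b| := abs_mul _ _
        _ ≤ 1 * 1 := mul_le_mul (abs_f_le _) (abs_W_le _ _ _ _) (abs_nonneg _) zero_le_one
        _ = 1 := mul_one 1
    have hmf : ((volume : Measure ℝ).prod (volume : Measure (Fin m → ℝ)))
        (Set.Icc (0:ℝ) 1 ×ˢ Set.Icc (0 : Fin m → ℝ) 1) < ⊤ := by
      rw [MeasureTheory.Measure.prod_prod]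
      exact ENNReal.mul_lt_top (isCompact_Icc.measure_lt_top) (volume_Icc_pi_lt_top m)
    have hHint : IntegrableOn H (Set.Icc (0:ℝ) 1 ×ˢ Set.Icc (0 : Fin m → ℝ) 1)
        ((volume : Measure ℝ).prod (volume : Measure (Fin m → ℝ))) :=
      integrableOn_of_bound hmf hHmeas 1 hHbd
    calc ∫ x in Set.Icc (0 : Fin (m+1) → ℝ) 1, W (m+1) x a b
        = ∫ x in e ⁻¹' (Set.Icc (0:ℝ) 1 ×ˢ Set.Icc (0 : Fin m → ℝ) 1), H (e x) := by
          rw [hpre]; exact MeasureTheory.setIntegral_congr_fun measurableSet_Icc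
            (fun x _ => hWe x)
      _ = ∫ p in (Set.Icc (0:ℝ) 1 ×ˢ Set.Icc (0 : Fin m → ℝ) 1), H p
            ∂(volume : Measure (ℝ × (Fin m → ℝ))) :=
          (volume_preserving_piFinSuccAbove (fun _ : Fin (m+1) => ℝ) 0).setIntegral_preimage_emb
            (MeasurableEquiv.measurableEmbedding _) H _
      _ = ∫ t in Set.Icc (0:ℝ) 1, ∫ y in Set.Icc (0 : Fin m → ℝ) 1, H (t, y) := by
          rw [MeasureTheory.Measure.volume_eq_prod]
          exact MeasureTheory.setIntegral_prod H hHint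
      _ = ∫ t in Set.Icc (0:ℝ) 1,
            ((-1:ℝ)^m / (m+1).factorial) *
              (f (t - a) * bernoulliFun (m+1) (Int.fract (b - t))) := by
          refine MeasureTheory.setIntegral_congr_fun measurableSet_Icc (fun t _ => ?_)
          rw [hH]
          simp only []
          rw [MeasureTheory.integral_const_mul, ih t b]
          ring
      _ = ((-1:ℝ)^m / (m+1).factorial) *
            ∫ t in Set.Icc (0:ℝ) 1, f (t - a) * bernoulliFun (m+1) (Int.fract (b - t)) :=
          MeasureTheory.integral_const_mul _ _
      _ = (-1:ℝ)^(m+1) * bernoulliFun (m+2) (Int.fract (b - a)) / (m+2).factorial := by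
          rw [MeasureTheory.integral_Icc_eq_integral_Ioc,
            ← intervalIntegral.integral_of_le (zero_le_one),
            conv_shift (m+1) (Nat.succ_ne_zero m) a b]
          rw [Nat.factorial_succ (m+1)]
          have h1 : ((m+1).factorial : ℝ) ≠ 0 := Nat.cast_ne_zero.2 (Nat.factorial_ne_zero _)
          have h2 : ((m:ℝ)+1+1) ≠ 0 := by positivity
          push_cast
          field_simp
          ring

end CWI

namespace CWI

def pt (m : ℕ) (x : Fin m → ℝ) (a b : ℝ) (j : ℕ) : ℝ :=
  if h : 1 ≤ j ∧ j ≤ m then x ⟨j - 1, by omega⟩ else if j = 0 then a else b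

lemma pt_shift (m : ℕ) (x : Fin (m+1) → ℝ) (a b : ℝ) (j : ℕ) :
    pt (m+1) x a b (j+1) = pt m (fun i => x i.succ) (x 0) b j := by
  unfold pt
  rcases Nat.eq_zero_or_pos j with hj | hj
  · subst hj
    rw [dif_pos (by omega : 1 ≤ 0 + 1 ∧ 0 + 1 ≤ m + 1), dif_neg (by omega)]
    simp
  · by_cases hjm : j ≤ m
    · rw [dif_pos (by omega : 1 ≤ j + 1 ∧ j + 1 ≤ m + 1), dif_pos (by omega : 1 ≤ j ∧ j ≤ m)]
      congr 1
      ext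
      simp [Fin.val_succ]
      omega
    · rw [dif_neg (by omega), dif_neg (by omega), if_neg (by omega), if_neg (by omega)]

lemma prod_pt (m : ℕ) (x : Fin m → ℝ) (a b : ℝ) :
    ∏ i ∈ Finset.range (m+1), f (pt m x a b (i+1) - pt m x a b i) = W m x a b := by
  induction m generalizing a with
  | zero =>
    rw [Finset.prod_range_one]
    show f (pt 0 x a b 1 - pt 0 x a b 0) = f (b - a)
    unfold pt
    rw [dif_neg (by omega), dif_neg (by omega)]
    norm_num
  | succ m ih =>
    rw [Finset.prod_range_succ']
    have h0 : f (pt (m+1) x a b (0+1) - pt (m+1) x a b 0) = f (x 0 - a) := by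
      congr 1
    have hsh : ∀ i : ℕ, f (pt (m+1) x a b (i+1+1) - pt (m+1) x a b (i+1))
        = f (pt m (fun i => x i.succ) (x 0) b (i+1) - pt m (fun i => x i.succ) (x 0) b i) := by
      intro i
      rw [pt_shift m x a b (i+1), pt_shift m x a b i]
    calc (∏ i ∈ Finset.range (m+1), f (pt (m+1) x a b (i+1+1) - pt (m+1) x a b (i+1)))
          * f (pt (m+1) x a b (0+1) - pt (m+1) x a b 0)
        = (∏ i ∈ Finset.range (m+1),
            f (pt m (fun i => x i.succ) (x 0) b (i+1) - pt m (fun i => x i.succ) (x 0) b i))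
          * f (x 0 - a) := by
          rw [h0]
          congr 1
          exact Finset.prod_congr rfl fun i _ => hsh i
      _ = W (m+1) x a b := by
          rw [ih]
          show _ = f (x 0 - a) * W m (fun i => x i.succ) (x 0) b
          ring

end CWI

end

/-- cyclic wheel integral and Bernoulli numbers. For `k = n+2 ≥ 2`,
`I_k = ∫_{[0,1]^{k-1}} ∏_{i=0}^{k-1} (frac(t_{i+1} − t_i) − 1/2) dt₁⋯dt_{k-1}`
(with `t₀ = t_k = 0`) vanishes for odd `k` and equals `−B_k/k! = 2ζ(k)/(2πi)^k`
for even `k`. -/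
theorem cyclic_wheel_integral_bernoulli (n : ℕ) :
    ∀ I : ℝ,
      I = (∫ x in Set.Icc (0 : Fin (n + 1) → ℝ) 1,
            ∏ i ∈ Finset.range (n + 2),
              (Int.fract
                ((fun j : ℕ => if h : 1 ≤ j ∧ j ≤ n + 1 then x ⟨j - 1, by omega⟩ else (0 : ℝ))
                    (i + 1) -
                 (fun j : ℕ => if h : 1 ≤ j ∧ j ≤ n + 1 then x ⟨j - 1, by omega⟩ else (0 : ℝ))
                    i) - 1 / 2)) →
      (Odd (n + 2) → I = 0) ∧
      (Even (n + 2) →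
        I = -((bernoulli (n + 2) : ℝ) / (n + 2).factorial) ∧
        (I : ℂ) = 2 * riemannZeta ((n + 2 : ℕ) : ℂ) /
          (2 * (π : ℂ) * Complex.I) ^ (n + 2)) := by
  intro I hI
  have hs : ∀ (x : Fin (n+1) → ℝ) (j : ℕ),
      (if h : 1 ≤ j ∧ j ≤ n + 1 then x ⟨j - 1, by omega⟩ else (0 : ℝ))
        = CWI.pt (n+1) x 0 0 j := by
    intro x j
    unfold CWI.pt
    by_cases h : 1 ≤ j ∧ j ≤ n + 1
    · rw [dif_pos h, dif_pos h]
    · rw [dif_neg h, dif_neg h]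
      split_ifs <;> rfl
  have hIW : I = (-1:ℝ)^(n+1) * bernoulliFun (n+2) (Int.fract (0 - 0 : ℝ))
      / (n+2).factorial := by
    rw [hI, ← CWI.integral_W (n+1) 0 0]
    refine MeasureTheory.setIntegral_congr_fun measurableSet_Icc (fun x _ => ?_)
    rw [← CWI.prod_pt (n+1) x 0 0]
    refine Finset.prod_congr rfl (fun i _ => ?_)
    simp only [hs x]
    rfl
  have h00 : Int.fract (0 - 0 : ℝ) = 0 := by norm_num
  rw [h00, bernoulliFun_eval_zero] at hIW
  constructor
  · intro hodd
    have hn : Odd (n+1+1) := hodd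
    have hb : bernoulli (n+2) = 0 := by
      rw [bernoulli_eq_bernoulli'_of_ne_one (by omega)]
      exact bernoulli'_eq_zero_of_odd hodd (by omega)
    rw [hIW, hb]
    simp
  · intro heven
    have hneg : (-1:ℝ)^(n+1) = -1 := by
      have : Odd (n+1) := by
        rcases heven with ⟨r, hr⟩
        exact ⟨r - 1, by omega⟩
      exact Odd.neg_one_pow this
    have hIval : I = -((bernoulli (n + 2) : ℝ) / (n + 2).factorial) := by
      rw [hIW, hneg]; ring
    refine ⟨hIval, ?_⟩
    obtain ⟨r, hr⟩ := heven
    have hk2 : n + 2 = 2 * r := by omega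
    have hr0 : r ≠ 0 := by omega
    have hzeta := riemannZeta_two_mul_nat hr0
    have hcast : ((n + 2 : ℕ) : ℂ) = ((2 * r : ℕ) : ℂ) := by rw [hk2]
    rw [hIval, hcast, hk2]
    push_cast [hzeta]
    have hppow : (2 * (π : ℂ) * Complex.I) ^ (2 * r)
        = (-1:ℂ)^r * (2:ℂ)^(2*r) * (π:ℂ)^(2*r) := by
      rw [pow_mul]
      have : (2 * (π : ℂ) * Complex.I) ^ 2 = -((2:ℂ)^2 * (π:ℂ)^2) := by
        rw [mul_pow, mul_pow, Complex.I_sq]; ring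
      rw [this]
      rw [neg_pow, mul_pow, ← pow_mul, ← pow_mul]
      ring
    rw [hppow]
    have h2 : (2:ℂ) * (2:ℂ)^(2*r - 1) = (2:ℂ)^(2*r) := by
      rw [← pow_succ']
      congr 1
      omega
    have hfac : (((2*r).factorial : ℕ) : ℂ) ≠ 0 := Nat.cast_ne_zero.2 (Nat.factorial_ne_zero _)
    have hpi : (π : ℂ) ≠ 0 := Complex.ofReal_ne_zero.2 Real.pi_ne_zero
    have hm1 : ((-1:ℂ))^r ≠ 0 := pow_ne_zero _ (by norm_num)
    have h2n : ((2:ℂ))^(2*r) ≠ 0 := pow_ne_zero _ (by norm_num)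
    have hpin : ((π:ℂ))^(2*r) ≠ 0 := pow_ne_zero _ hpi
    field_simp
    rw [pow_succ]
    linear_combination ((-1:ℂ)^r * ((bernoulli (2*r) : ℚ):ℂ)) * h2
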